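/- Let (A, q) be a metric p-group of exponent n = p^e that is generated by its isotropic elements, and let a ∈ A be an isotropic element of order n. Then there exists c ∈ A with q(c) = 1 such that B(a, c) is a primitive n-th root of unity, where B is the bilinear form associated to q. -/

import Mathlib

/-- The bilinear form associated to a quadratic form `q : A → kˣ`. -/
def Bform {A k : Type*} [AddCommGroup A] [Field k] (q : A → kˣ) (x y : A) : kˣ :=
  q (x + y) * (q x * q y)⁻¹

/-- `q : A → kˣ` is a quadratic form: `q(-x) = q(x)` and its associated form is bilinear. -/
def IsQuadraticForm {A k : Type*} [AddCommGroup A] [Field k] (q : A → kˣ) : Prop :=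
  (∀ x, q (-x) = q x) ∧ ∀ x y z, Bform q (x + y) z = Bform q x z * Bform q y z

/-- Non-degeneracy of the bilinear form associated to `q`. -/
def Nondeg {A k : Type*} [AddCommGroup A] [Field k] (q : A → kˣ) : Prop :=
  ∀ x, (∀ y, Bform q x y = 1) → x = 0

lemma Bform_comm {A k : Type*} [AddCommGroup A] [Field k] (q : A → kˣ) (x y : A) :
    Bform q x y = Bform q y x := by
  unfold Bform; rw [add_comm, mul_comm (q x)]

lemma Bform_zero_left {A k : Type*} [AddCommGroup A] [Field k] {q : A → kˣ}
    (hq : IsQuadraticForm q) (z : A) : Bform q 0 z = 1 := by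
  have h := hq.2 0 0 z
  rw [add_zero] at h
  exact (left_eq_mul.mp h)

lemma Bform_nsmul {A k : Type*} [AddCommGroup A] [Field k] {q : A → kˣ}
    (hq : IsQuadraticForm q) (n : ℕ) (x z : A) :
    Bform q (n • x) z = (Bform q x z) ^ n := by
  induction n with
  | zero => simpa using Bform_zero_left hq z
  | succ n ih => rw [succ_nsmul, hq.2, ih, pow_succ]

theorem stmt5 {k : Type*} [Field k] [CharZero k] [IsAlgClosed k]
    {A : Type*} [AddCommGroup A] [Finite A]
    (p e : ℕ) (hp : p.Prime) (he : 1 ≤ e)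
    (q : A → kˣ) (hq : IsQuadraticForm q) (hnd : Nondeg q)
    (hexp : AddMonoid.exponent A = p ^ e)
    (hgen : AddSubgroup.closure {x : A | q x = 1} = ⊤)
    (a : A) (ha : q a = 1) (hord : addOrderOf a = p ^ e) :
    ∃ c : A, q c = 1 ∧ IsPrimitiveRoot (Bform q a c) (p ^ e) := by
  have hBsym : ∀ x y : A, Bform q x y = Bform q y x := Bform_comm q
  -- key: there is an isotropic c with (B a c)^(p^(e-1)) ≠ 1
  have key : ∃ c : A, q c = 1 ∧ (Bform q a c) ^ (p ^ (e - 1)) ≠ 1 := by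
    by_contra hcon
    push_neg at hcon
    set m := p ^ (e - 1) with hm
    -- the homomorphism x ↦ (B a x)^m
    let g : A →+ Additive kˣ :=
      { toFun := fun x => Additive.ofMul ((Bform q a x) ^ m)
        map_zero' := by
          have : Bform q a 0 = 1 := by rw [hBsym]; exact Bform_zero_left hq a
          simp [this]
        map_add' := by
          intro x y
          have : Bform q a (x + y) = Bform q a x * Bform q a y := by
            rw [hBsym, hq.2, hBsym x a, hBsym y a]
          simp [this, mul_pow] }
    have hker : ∀ x : A, g x = 0 := by
      have hle : AddSubgroup.closure {x : A | q x = 1} ≤ g.ker := by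
        apply (AddSubgroup.closure_le _).mpr
        intro x hx
        simpa [g, AddMonoidHom.mem_ker, -ofMul_pow] using hcon x hx
      rw [hgen] at hle
      intro x
      exact hle (AddSubgroup.mem_top x)
    have hall : ∀ y : A, Bform q (m • a) y = 1 := by
      intro y
      have := hker y
      have h1 : (Bform q a y) ^ m = 1 := by
        simpa [g, -ofMul_pow] using this
      rw [Bform_nsmul hq]
      exact h1
    have hza : m • a = 0 := hnd _ hall
    have hdvd : p ^ e ∣ p ^ (e - 1) := by
      rw [← hord]; exact addOrderOf_dvd_of_nsmul_eq_zero hza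
    have := (Nat.pow_dvd_pow_iff_le_right hp.one_lt).mp hdvd
    omega
  obtain ⟨c, hc1, hc2⟩ := key
  refine ⟨c, hc1, ?_⟩
  set ζ := Bform q a c with hζ
  have hpow : ζ ^ (p ^ e) = 1 := by
    have hna : (p ^ e) • a = 0 := by
      rw [← hord]; exact addOrderOf_nsmul_eq_zero a
    have := Bform_nsmul hq (p ^ e) a c
    rw [hna, Bform_zero_left hq] at this
    exact this.symm
  have hdvd : orderOf ζ ∣ p ^ e := orderOf_dvd_of_pow_eq_one hpow
  obtain ⟨j, hj, hjo⟩ := (Nat.dvd_prime_pow hp).mp hdvd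
  have hje : j = e := by
    by_contra hne
    have hjle : j ≤ e - 1 := by omega
    apply hc2
    have : orderOf ζ ∣ p ^ (e - 1) := hjo ▸ pow_dvd_pow p hjle
    exact orderOf_dvd_iff_pow_eq_one.mp this
  have horder : orderOf ζ = p ^ e := by rw [hjo, hje]
  have := IsPrimitiveRoot.orderOf ζ
  rwa [horder] at this
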